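/- For a 2-periodic acyclic chain complex over a ring R, the boundary module B_[0] is stably free if and only if B_[1] is stably free. -/

import Mathlib

lemma stablyFree_step (R : Type*) [Ring R]
    (n0 n1 : ℕ)
    (d : (Fin n1 → R) →ₗ[R] (Fin n0 → R)) (δ : (Fin n0 → R) →ₗ[R] (Fin n1 → R))
    (h1 : LinearMap.ker d = LinearMap.range δ)
    (hsf : ∃ s k : ℕ, Nonempty ((↥(LinearMap.range d) × (Fin s → R)) ≃ₗ[R] (Fin k → R))) :
    ∃ s k : ℕ, Nonempty ((↥(LinearMap.range δ) × (Fin s → R)) ≃ₗ[R] (Fin k → R)) := by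
  obtain ⟨s, k, ⟨e⟩⟩ := hsf
  -- range d is projective
  have hp : Module.Projective R ↥(LinearMap.range d) :=
    Module.Projective.of_split
      (e.toLinearMap.comp (LinearMap.inl R _ _))
      ((LinearMap.fst R _ _).comp e.symm.toLinearMap) (by ext x; simp)
  set d' : (Fin n1 → R) →ₗ[R] ↥(LinearMap.range d) := d.rangeRestrict with hd'
  have hsurj : Function.Surjective d' := LinearMap.surjective_rangeRestrict d
  obtain ⟨g, hg⟩ := d'.exists_rightInverse_of_surjective (LinearMap.range_eq_top.2 hsurj)
  have hmem : ∀ x : Fin n1 → R, x - g (d' x) ∈ LinearMap.range δ := by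
    intro x
    rw [← h1, LinearMap.mem_ker, map_sub]
    have : d' (g (d' x)) = d' x := by
      rw [← LinearMap.comp_apply, hg, LinearMap.id_apply]
    have hval : d (g (d' x)) = d x := congrArg Subtype.val this
    rw [hval, sub_self]
  set φ : (Fin n1 → R) →ₗ[R] ↥(LinearMap.range δ) × ↥(LinearMap.range d) :=
    LinearMap.prod ((LinearMap.id - g.comp d').codRestrict _ hmem) d' with hφ
  set ψ : ↥(LinearMap.range δ) × ↥(LinearMap.range d) →ₗ[R] (Fin n1 → R) :=
    LinearMap.coprod (LinearMap.range δ).subtype g with hψ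
  have e2 : (↥(LinearMap.range δ) × ↥(LinearMap.range d)) ≃ₗ[R] (Fin n1 → R) := by
    refine LinearEquiv.ofLinear ψ φ ?_ ?_
    · ext x
      simp [hφ, hψ, LinearMap.codRestrict]
    · apply LinearMap.ext
      rintro ⟨⟨y, hy⟩, p⟩
      have hy0 : d' y = 0 := by
        have h : y ∈ LinearMap.ker d := h1 ▸ hy
        rw [LinearMap.mem_ker] at h
        exact Subtype.ext (by simp [hd', h])
      have hgp : d' (g p) = p := by
        rw [← LinearMap.comp_apply, hg, LinearMap.id_apply]
      refine Prod.ext (Subtype.ext ?_) ?_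
      · simp [hφ, hψ, LinearMap.codRestrict, hy0, hgp]
      · simp [hφ, hψ, hy0, hgp]
  -- assemble: range δ × Fin k ≃ range δ × (range d × Fin s) ≃ (range δ × range d) × Fin s
  --   ≃ Fin n1 × Fin s ≃ Fin (n1+s)
  exact ⟨k, n1 + s, ⟨((((LinearEquiv.refl R (↥(LinearMap.range δ))).prodCongr e.symm).trans
    (LinearEquiv.prodAssoc R _ _ _).symm).trans (e2.prodCongr (LinearEquiv.refl R _))).trans
    (((LinearEquiv.sumArrowLequivProdArrow (Fin n1) (Fin s) R R).symm).trans
    (LinearEquiv.funCongrLeft R R finSumFinEquiv.symm))⟩⟩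

theorem stmt_6 (R : Type*) [Ring R] [InvariantBasisNumber R]
    (n0 n1 : ℕ)
    (d : (Fin n1 → R) →ₗ[R] (Fin n0 → R)) (δ : (Fin n0 → R) →ₗ[R] (Fin n1 → R))
    (hdδ : d ∘ₗ δ = 0) (hδd : δ ∘ₗ d = 0)
    (h0 : LinearMap.ker δ = LinearMap.range d)
    (h1 : LinearMap.ker d = LinearMap.range δ) :
    (∃ s k : ℕ, Nonempty ((↥(LinearMap.range d) × (Fin s → R)) ≃ₗ[R] (Fin k → R))) ↔
    (∃ s k : ℕ, Nonempty ((↥(LinearMap.range δ) × (Fin s → R)) ≃ₗ[R] (Fin k → R))) := by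
  constructor
  · exact stablyFree_step R n0 n1 d δ h1
  · exact stablyFree_step R n1 n0 δ d h0
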